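/- Suppose α ≥ 2 and 0 < ε < 1/5. Then every continuous path σ : [0,1] → ℝ² of bounded variation with σ(0) = X_init = (1−ε, 1+2ε) and σ(1) = X_goal = (α+1+ε, 1+2ε) whose image intersects the region B₁ = [0,1] × [α+1, α+2] satisfies TV(σ) ≥ 2α − 2ε. -/

import Mathlib

/-- A point of the plane `ℝ²` (as a Euclidean space) with given coordinates. -/
noncomputable def pt (x y : ℝ) : EuclideanSpace ℝ (Fin 2) := WithLp.toLp 2 ![x, y]

/-- Total variation of a path over `[0,1]`: the supremum over all partitions
`0 = b₀ < ⋯ < bₙ = 1` of `Σ ‖σ(bᵢ) − σ(bᵢ₋₁)‖`. -/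
noncomputable def TV (σ : ℝ → EuclideanSpace ℝ (Fin 2)) : ℝ :=
  (eVariationOn σ (Set.Icc 0 1)).toReal

lemma coord_le_dist (x y : EuclideanSpace ℝ (Fin 2)) (i : Fin 2) :
    |x i - y i| ≤ dist x y := by
  rw [EuclideanSpace.dist_eq]
  have h : |x i - y i| = Real.sqrt ((dist (x i) (y i))^2) := by
    rw [Real.sqrt_sq_eq_abs, Real.dist_eq, abs_abs]
  rw [h]
  exact Real.sqrt_le_sqrt
    (Finset.single_le_sum (f := fun j => dist (x j) (y j) ^ 2)
      (fun j _ => sq_nonneg _) (Finset.mem_univ i))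

/-- In the promenade problem (with `α ≥ 2`, `0 < ε < 1/5`), any continuous path of
bounded variation from `X_init = (1−ε, 1+2ε)` to `X_goal = (α+1+ε, 1+2ε)` whose image
meets `B₁ = [0,1] × [α+1, α+2]` has total variation at least `2α − 2ε`. -/
theorem promenade_through_B1_long (α ε : ℝ) (hα : 2 ≤ α) (hε0 : 0 < ε) (hε1 : ε < 1/5)
    (σ : ℝ → EuclideanSpace ℝ (Fin 2))
    (hcont : ContinuousOn σ (Set.Icc 0 1))
    (hbv : BoundedVariationOn σ (Set.Icc 0 1))
    (hinit : σ 0 = pt (1 - ε) (1 + 2*ε))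
    (hgoal : σ 1 = pt (α + 1 + ε) (1 + 2*ε))
    (hB : ∃ s ∈ Set.Icc (0:ℝ) 1,
      σ s 0 ∈ Set.Icc (0:ℝ) 1 ∧ σ s 1 ∈ Set.Icc (α+1) (α+2)) :
    2*α - 2*ε ≤ TV σ := by
  obtain ⟨s, hs, hx, hy⟩ := hB
  -- coordinates of endpoints
  have h00 : σ 0 0 = 1 - ε := by rw [hinit]; simp [pt]
  have h01 : σ 0 1 = 1 + 2*ε := by rw [hinit]; simp [pt]
  have h10 : σ 1 0 = α + 1 + ε := by rw [hgoal]; simp [pt]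
  -- distance lower bounds
  have d1 : α - 2*ε ≤ dist (σ 0) (σ s) := by
    have := coord_le_dist (σ 0) (σ s) 1
    rw [h01] at this
    have h2 : α - 2*ε ≤ |1 + 2*ε - σ s 1| := by
      have := hy.1
      rw [abs_sub_comm]
      calc α - 2*ε ≤ σ s 1 - (1 + 2*ε) := by linarith
        _ ≤ |σ s 1 - (1 + 2*ε)| := le_abs_self _
    linarith
  have d2 : α ≤ dist (σ s) (σ 1) := by
    have := coord_le_dist (σ s) (σ 1) 0
    rw [h10] at this
    have h2 : α ≤ |σ s 0 - (α + 1 + ε)| := by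
      have := hx.2
      calc α ≤ (α + 1 + ε) - σ s 0 := by linarith
        _ ≤ |σ s 0 - (α + 1 + ε)| := by rw [abs_sub_comm]; exact le_abs_self _
    linarith
  -- split variation at s
  have hsub1 : Set.Icc (0:ℝ) s ⊆ Set.Icc 0 1 := Set.Icc_subset_Icc le_rfl hs.2
  have hsub2 : Set.Icc s (1:ℝ) ⊆ Set.Icc 0 1 := Set.Icc_subset_Icc hs.1 le_rfl
  have hE1 : edist (σ 0) (σ s) ≤ eVariationOn σ (Set.Icc 0 s) :=
    eVariationOn.edist_le σ (Set.left_mem_Icc.2 hs.1) (Set.right_mem_Icc.2 hs.1)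
  have hE2 : edist (σ s) (σ 1) ≤ eVariationOn σ (Set.Icc s 1) :=
    eVariationOn.edist_le σ (Set.left_mem_Icc.2 hs.2) (Set.right_mem_Icc.2 hs.2)
  have hsum : eVariationOn σ (Set.Icc 0 s) + eVariationOn σ (Set.Icc s 1)
      ≤ eVariationOn σ (Set.Icc 0 1) := by
    have h := eVariationOn.add_le_union σ
      (s := Set.Icc (0:ℝ) s) (t := Set.Icc s 1)
      (fun x hxm y hym => le_trans hxm.2 hym.1)
    rw [Set.Icc_union_Icc_eq_Icc hs.1 hs.2] at h
    exact h
  have key : edist (σ 0) (σ s) + edist (σ s) (σ 1) ≤ eVariationOn σ (Set.Icc 0 1) :=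
    le_trans (add_le_add hE1 hE2) hsum
  have hfin : eVariationOn σ (Set.Icc 0 1) ≠ ⊤ := hbv
  have hreal : dist (σ 0) (σ s) + dist (σ s) (σ 1) ≤ TV σ := by
    have := ENNReal.toReal_mono hfin key
    rwa [ENNReal.toReal_add (edist_ne_top _ _) (edist_ne_top _ _),
      ← dist_edist, ← dist_edist] at this
  linarith
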